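/- (Theorem 3.5: correctness of SLD-Merge.) Let e ∈ spine1(e1*) and let F = { f ∈ spine2(e2*) : r(f) > r(e) }. If F = ∅, then p(e) = p1(e) (both defined or both undefined). If F ≠ ∅ with minimum-rank element f0, then: if p1(e) is defined and r(p1(e)) < r(f0) then p(e) = p1(e); otherwise p(e) = f0. The symmetric statement holds for e ∈ spine2(e2*). Together with the fact that edges off these two spines keep their parents, this shows that the SLD of G is obtained from the SLDs of G1 and G2 by merging the two rank-sorted spines spine1(e1*) and spine2(e2*). -/

import Mathlib

/- Single tree setting: `G` is a finite tree with injective edge ranks `r`.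
`edgesBetween G e f` is the set of edges strictly between edges `e` and `f`
on the unique tree path connecting them (an edge `g ∉ {e,f}` lies on this path
iff it belongs to every walk containing both `e` and `f`). -/

open SimpleGraph

variable {V : Type*}

/-- The set of edges lying strictly between edges `e` and `f` on the tree path
connecting them (excluding `e` and `f`). -/
def edgesBetween (G : SimpleGraph V) (e f : Sym2 V) : Set (Sym2 V) :=
  {g | g ∈ G.edgeSet ∧ g ≠ e ∧ g ≠ f ∧
    ∀ (a b : V) (w : G.Walk a b), e ∈ w.edges → f ∈ w.edges → g ∈ w.edges}

/-- `f` is an adjacent superior of `e`: `r e < r f` and every edge `g` on the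
path between `e` and `f` satisfies `r g < r e`. -/
def AdjSup (G : SimpleGraph V) (r : Sym2 V → ℕ) (e f : Sym2 V) : Prop :=
  f ∈ G.edgeSet ∧ r e < r f ∧ ∀ g ∈ edgesBetween G e f, r g < r e

/-- `f` is an adjacent inferior of `e`: `r f < r e` and every edge `g` on the
path between `e` and `f` satisfies `r g < r e`. -/
def AdjInf (G : SimpleGraph V) (r : Sym2 V → ℕ) (e f : Sym2 V) : Prop :=
  f ∈ G.edgeSet ∧ r f < r e ∧ ∀ g ∈ edgesBetween G e f, r g < r e

/-- `f` is the SLD parent of `e`: the minimum-rank adjacent superior of `e`. -/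
def IsParent (G : SimpleGraph V) (r : Sym2 V → ℕ) (e f : Sym2 V) : Prop :=
  AdjSup G r e f ∧ ∀ g, AdjSup G r e g → r f ≤ r g

/-- The spine of `e`: the set of edges obtained by iterating the SLD parent
function starting from `e` (including `e` itself). -/
def spine (G : SimpleGraph V) (r : Sym2 V → ℕ) (e : Sym2 V) : Set (Sym2 V) :=
  {f | Relation.ReflTransGen (IsParent G r) e f}

namespace SLD

open SimpleGraph Walk

variable {X : SimpleGraph V}

/-- Hom from induced subgraph to ambient graph. -/
def indHom (X : SimpleGraph V) (s : Set V) : X.induce s →g X :=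
  ⟨Subtype.val, fun {a b} h => h⟩

def toInduce {s : Set V} : ∀ {a b : V} (w : X.Walk a b) (hs : ∀ z ∈ w.support, z ∈ s),
    (X.induce s).Walk ⟨a, hs a w.start_mem_support⟩ ⟨b, hs b w.end_mem_support⟩
  | _, _, Walk.nil, _ => Walk.nil
  | _, _, Walk.cons h p, hs =>
      Walk.cons (by exact h) (toInduce p (fun z hz => hs z (by simp [support_cons, hz])))

lemma map_toInduce {s : Set V} : ∀ {a b : V} (w : X.Walk a b) (hs),
    (toInduce w hs).map (indHom X s) = w
  | _, _, Walk.nil, _ => rfl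
  | _, _, Walk.cons h p, hs => by
      simp only [toInduce, Walk.map_cons]
      exact congrArg _ (map_toInduce p _)

lemma support_subset_support : ∀ {a b : V} (w : X.Walk a b), a ∈ X.support →
    ∀ z ∈ w.support, z ∈ X.support
  | _, _, Walk.nil, ha, z, hz => by
      rw [support_nil, List.mem_singleton] at hz; exact hz ▸ ha
  | _, _, Walk.cons h p, _, z, hz => by
      rw [support_cons, List.mem_cons] at hz
      rcases hz with rfl | hz
      · exact (SimpleGraph.mem_support _).mpr ⟨_, h⟩
      · exact support_subset_support p ((SimpleGraph.mem_support _).mpr ⟨_, h.symm⟩) z hz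

lemma exists_walk (ht : (X.induce X.support).IsTree) {x y : V}
    (hx : x ∈ X.support) (hy : y ∈ X.support) : Nonempty (X.Walk x y) := by
  obtain ⟨w⟩ := ht.isConnected.preconnected ⟨x, hx⟩ ⟨y, hy⟩
  exact ⟨w.map (indHom X X.support)⟩

lemma path_unique (ht : (X.induce X.support).IsTree) {x y : V} (hx : x ∈ X.support)
    {p q : X.Walk x y} (hp : p.IsPath) (hq : q.IsPath) : p = q := by
  have hps := support_subset_support p hx
  have hqs := support_subset_support q hx
  have hpi : (toInduce p hps).IsPath :=
    Walk.IsPath.of_map (f := indHom X X.support) (by rw [map_toInduce]; exact hp)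
  have hqi : (toInduce q hqs).IsPath :=
    Walk.IsPath.of_map (f := indHom X X.support) (by rw [map_toInduce]; exact hq)
  have : toInduce p hps = toInduce q hqs := (ht.existsUnique_path _ _).unique hpi hqi
  have := congrArg (Walk.map (indHom X X.support)) this
  rwa [map_toInduce, map_toInduce] at this


lemma farEnd (ht : (X.induce X.support).IsTree) {x y c : V} (hxy : X.Adj x y)
    (hc : c ∈ X.support) :
    ∃ (a b : V) (hab : X.Adj a b) (p : X.Walk b c),
      s(a, b) = s(x, y) ∧ (Walk.cons hab p).IsPath := by
  classical
  have hy : y ∈ X.support := (SimpleGraph.mem_support _).mpr ⟨_, hxy.symm⟩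
  have hx : x ∈ X.support := (SimpleGraph.mem_support _).mpr ⟨_, hxy⟩
  obtain ⟨w0⟩ := exists_walk ht hy hc
  set p0 := w0.bypass with hp0
  have hp0p : p0.IsPath := w0.bypass_isPath
  by_cases hxs : x ∈ p0.support
  · -- far endpoint is y
    have htu : (p0.takeUntil x hxs) = Walk.cons hxy.symm Walk.nil := by
      apply path_unique ht hy (hp0p.takeUntil hxs)
      rw [Walk.cons_isPath_iff]
      exact ⟨Walk.IsPath.nil, by simp [hxy.ne']⟩
    refine ⟨y, x, hxy.symm, p0.dropUntil x hxs, Sym2.eq_swap, ?_⟩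
    have : Walk.cons hxy.symm (p0.dropUntil x hxs) = p0 := by
      calc Walk.cons hxy.symm (p0.dropUntil x hxs)
          = (Walk.cons hxy.symm Walk.nil).append (p0.dropUntil x hxs) := by simp
        _ = (p0.takeUntil x hxs).append (p0.dropUntil x hxs) := by rw [htu]
        _ = p0 := p0.take_spec hxs
    rw [this]; exact hp0p
  · exact ⟨x, y, hxy, p0, rfl, (Walk.cons_isPath_iff _ _).mpr ⟨hp0p, hxs⟩⟩

lemma end_eq_of_mem_takeUntil [DecidableEq V] {s t : V} {p : X.Walk s t} (hp : p.IsPath)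
    {u : V} (hu : u ∈ p.support) (htm : t ∈ (p.takeUntil u hu).support) : t = u := by
  have hspec := p.take_spec hu
  have hnd : p.support.Nodup := hp.support_nodup
  have hsupp : p.support = (p.takeUntil u hu).support ++ (p.dropUntil u hu).support.tail := by
    conv_lhs => rw [← hspec]
    exact Walk.support_append _ _
  have htd : t ∈ (p.dropUntil u hu).support := Walk.end_mem_support _
  rw [(p.dropUntil u hu).support_eq_cons, List.mem_cons] at htd
  rcases htd with h | h
  · exact h
  · exfalso
    rw [hsupp] at hnd
    exact (List.disjoint_of_nodup_append hnd) htm h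

/-- The canonical path between two distinct edges of a tree-ish graph. -/
lemma pathBetween (ht : (X.induce X.support).IsTree) {e f : Sym2 V}
    (he : e ∈ X.edgeSet) (hf : f ∈ X.edgeSet) (hne : e ≠ f) :
    ∃ (s t : V) (P : X.Walk s t), P.IsPath ∧ e ∈ P.edges ∧ f ∈ P.edges ∧ s ∈ e ∧ t ∈ f ∧
      (∃ (b2 : V) (h1 : X.Adj s b2) (Pt : X.Walk b2 t), P = Walk.cons h1 Pt ∧ s(s, b2) = e) ∧
      (∃ (u2 : V) (h2 : X.Adj u2 t) (Pi : X.Walk s u2), P = Pi.concat h2 ∧ s(u2, t) = f) ∧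
      ∀ (a b : V) (w : X.Walk a b), e ∈ w.edges → f ∈ w.edges → ∀ g' ∈ P.edges, g' ∈ w.edges := by
  classical
  induction e using Sym2.ind with | _ x y =>
  induction f using Sym2.ind with | _ c d =>
  have hxy : X.Adj x y := he
  have hcd : X.Adj c d := hf
  have hcs : c ∈ X.support := (SimpleGraph.mem_support _).mpr ⟨_, hcd⟩
  obtain ⟨a, b, hab, p0, hsab, hP0⟩ := farEnd ht hxy hcs
  set P0 := Walk.cons hab p0 with hP0def
  have heP0 : s(x, y) ∈ P0.edges := by
    rw [hP0def, Walk.edges_cons, ← hsab]; exact List.mem_cons_self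
  -- construct P with required structure
  have key : ∃ (t : V) (P : X.Walk a t), P.IsPath ∧ s(x,y) ∈ P.edges ∧ s(c,d) ∈ P.edges ∧
      t ∈ s(c,d) ∧
      (∃ (b2 : V) (h1 : X.Adj a b2) (Pt : X.Walk b2 t), P = Walk.cons h1 Pt ∧ s(a, b2) = s(x,y)) ∧
      (∃ (u2 : V) (h2 : X.Adj u2 t) (Pi : X.Walk a u2), P = Pi.concat h2 ∧ s(u2, t) = s(c,d)) := by
    by_cases hd : d ∈ P0.support
    · -- f's last edge case: dropUntil d is the single edge (d,c)
      have hdc : X.Adj d c := hcd.symm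
      have hdrop : P0.dropUntil d hd = Walk.cons hdc Walk.nil := by
        have hds : d ∈ X.support := (SimpleGraph.mem_support _).mpr ⟨_, hdc⟩
        apply path_unique ht hds (hP0.dropUntil hd)
        rw [Walk.cons_isPath_iff]
        exact ⟨Walk.IsPath.nil, by simp [hdc.ne]⟩
      have hconcat : P0 = (P0.takeUntil d hd).concat hdc := by
        calc P0 = (P0.takeUntil d hd).append (P0.dropUntil d hd) := (P0.take_spec hd).symm
          _ = (P0.takeUntil d hd).append (Walk.cons hdc Walk.nil) := by rw [hdrop]
          _ = (P0.takeUntil d hd).concat hdc := rfl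
      refine ⟨c, P0, hP0, heP0, ?_, ?_, ?_, ?_⟩
      · rw [hconcat, Walk.edges_concat]
        rw [List.concat_eq_append]
        exact List.mem_append.mpr (Or.inr (List.mem_singleton.mpr Sym2.eq_swap))
      · exact Sym2.mem_mk_left _ _
      · exact ⟨b, hab, p0, rfl, hsab⟩
      · exact ⟨d, hdc, P0.takeUntil d hd, hconcat, Sym2.eq_swap⟩
    · -- append edge (c,d) at the end
      refine ⟨d, P0.concat hcd, ?_, ?_, ?_, ?_, ?_, ?_⟩
      · have : (P0.concat hcd).reverse.IsPath := by
          rw [Walk.reverse_concat]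
          rw [Walk.cons_isPath_iff]
          exact ⟨hP0.reverse, by rwa [Walk.support_reverse, List.mem_reverse]⟩
        rwa [Walk.isPath_reverse_iff] at this
      · rw [Walk.edges_concat, List.concat_eq_append]; exact List.mem_append.mpr (Or.inl heP0)
      · rw [Walk.edges_concat, List.concat_eq_append]
        exact List.mem_append.mpr (Or.inr (List.mem_singleton.mpr rfl))
      · exact Sym2.mem_mk_right _ _
      · refine ⟨b, hab, p0.concat hcd, ?_, hsab⟩
        rw [hP0def, Walk.concat_cons]
      · exact ⟨c, hcd, P0, rfl, rfl⟩
  obtain ⟨t, P, hPp, heP, hfP, htf, hcons, hconc⟩ := key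
  have has : a ∈ s(x,y) := by rw [← hsab]; exact Sym2.mem_mk_left _ _
  refine ⟨a, t, P, hPp, heP, hfP, has, htf, hcons, hconc, ?_⟩
  -- every walk containing both edges contains P's edges
  intro a' b' w hew hfw g' hg'
  have haw : a ∈ w.support := by
    rw [← hsab] at hew
    exact w.fst_mem_support_of_mem_edges hew
  have htw : t ∈ w.support := by
    rw [Sym2.mem_iff_exists] at htf
    obtain ⟨o, ho⟩ := htf
    rw [ho] at hfw
    exact w.fst_mem_support_of_mem_edges hfw
  have hasupp : a ∈ X.support := by
    rcases hcons with ⟨b2, h1, _, _, _⟩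
    exact (SimpleGraph.mem_support _).mpr ⟨_, h1⟩
  set u0 := (w.takeUntil a haw).reverse.append (w.takeUntil t htw) with hu0
  have hu0e : ∀ g'' ∈ u0.edges, g'' ∈ w.edges := by
    intro g'' hg''
    rw [hu0, Walk.edges_append, List.mem_append, Walk.edges_reverse, List.mem_reverse] at hg''
    rcases hg'' with h | h
    · exact w.edges_takeUntil_subset _ h
    · exact w.edges_takeUntil_subset _ h
  have hbp : u0.bypass = P := path_unique ht hasupp u0.bypass_isPath hPp
  have : g' ∈ u0.bypass.edges := by rw [hbp]; exact hg'
  exact hu0e g' (u0.edges_bypass_subset this)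


lemma exists_parent {G : SimpleGraph V} {r : Sym2 V → ℕ} {e h0 : Sym2 V}
    (h : AdjSup G r e h0) : ∃ g, IsParent G r e g := by
  have hS : {n | ∃ g, AdjSup G r e g ∧ r g = n}.Nonempty := ⟨r h0, h0, h, rfl⟩
  obtain ⟨g, hg, hrg⟩ := Nat.sInf_mem hS
  exact ⟨g, hg, fun g' hg' => hrg ▸ Nat.sInf_le ⟨g', hg', rfl⟩⟩

lemma spine_sub_edgeSet {G : SimpleGraph V} {r : Sym2 V → ℕ} {m : Sym2 V}
    (hm : m ∈ G.edgeSet) : ∀ f ∈ spine G r m, f ∈ G.edgeSet := by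
  intro f hf
  induction hf with
  | refl => exact hm
  | tail _ hp _ => exact hp.1.1

/-- Climb: if `f` is an adjacent superior of an element `cur` of the spine of `m`,
then `f` is on the spine of `m`. -/
lemma spine_of_adjSup {r : Sym2 V → ℕ} (ht : (X.induce X.support).IsTree)
    (hrX : Set.InjOn r X.edgeSet) {m f : Sym2 V} (hm : m ∈ X.edgeSet) :
    ∀ (k : ℕ) (cur : Sym2 V), cur ∈ spine X r m → AdjSup X r cur f →
      r f - r cur ≤ k → f ∈ spine X r m := by
  intro k
  induction k with
  | zero => intro cur _ hsup hk; exact absurd hsup.2.1 (by omega)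
  | succ k ih =>
    intro cur hcur hsup hk
    obtain ⟨h, hpar⟩ := exists_parent hsup
    have hsp : h ∈ spine X r m := Relation.ReflTransGen.tail hcur hpar
    have hle : r h ≤ r f := hpar.2 f hsup
    by_cases heq : h = f
    · rwa [heq] at hsp
    have hlt : r h < r f :=
      lt_of_le_of_ne hle (fun hEq => heq (hrX hpar.1.1 hsup.1 hEq))
    have hcurE : cur ∈ X.edgeSet := spine_sub_edgeSet hm cur hcur
    have hch : cur ≠ h := fun hEq => absurd hpar.1.2.1 (by rw [hEq]; exact lt_irrefl _)
    have hcf : cur ≠ f := fun hEq => absurd hsup.2.1 (by rw [hEq]; exact lt_irrefl _)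
    obtain ⟨s1, t1, P1, hP1p, hcP1, hhP1, _, _, _, _, hP1all⟩ :=
      pathBetween ht hcurE hpar.1.1 hch
    obtain ⟨s2, t2, P2, hP2p, hcP2, hfP2, _, _, _, _, hP2all⟩ :=
      pathBetween ht hcurE hsup.1 hcf
    -- get endpoints of cur
    obtain ⟨z1, z2, hz⟩ : ∃ z1 z2, cur = s(z1, z2) := by
      induction cur using Sym2.ind with | _ z1 z2 => exact ⟨z1, z2, rfl⟩
    classical
    have hz1P1 : z1 ∈ P1.support := P1.fst_mem_support_of_mem_edges (hz ▸ hcP1)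
    have hz1P2 : z1 ∈ P2.support := P2.fst_mem_support_of_mem_edges (hz ▸ hcP2)
    have hA : ∃ (u : V) (α : X.Walk z1 u), h ∈ α.edges ∧ ∀ g'' ∈ α.edges, g'' ∈ P1.edges := by
      have := P1.take_spec hz1P1
      have hsplit : h ∈ (P1.takeUntil z1 hz1P1).edges ∨ h ∈ (P1.dropUntil z1 hz1P1).edges := by
        rw [← List.mem_append, ← Walk.edges_append, this]; exact hhP1
      rcases hsplit with hmem | hmem
      · exact ⟨s1, (P1.takeUntil z1 hz1P1).reverse, by rwa [Walk.edges_reverse, List.mem_reverse],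
          fun g'' hg'' => P1.edges_takeUntil_subset _ (by rwa [Walk.edges_reverse, List.mem_reverse] at hg'')⟩
      · exact ⟨t1, P1.dropUntil z1 hz1P1, hmem, fun g'' hg'' => P1.edges_dropUntil_subset _ hg''⟩
    have hB : ∃ (u : V) (β : X.Walk z1 u), f ∈ β.edges ∧ ∀ g'' ∈ β.edges, g'' ∈ P2.edges := by
      have := P2.take_spec hz1P2
      have hsplit : f ∈ (P2.takeUntil z1 hz1P2).edges ∨ f ∈ (P2.dropUntil z1 hz1P2).edges := by
        rw [← List.mem_append, ← Walk.edges_append, this]; exact hfP2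
      rcases hsplit with hmem | hmem
      · exact ⟨s2, (P2.takeUntil z1 hz1P2).reverse, by rwa [Walk.edges_reverse, List.mem_reverse],
          fun g'' hg'' => P2.edges_takeUntil_subset _ (by rwa [Walk.edges_reverse, List.mem_reverse] at hg'')⟩
      · exact ⟨t2, P2.dropUntil z1 hz1P2, hmem, fun g'' hg'' => P2.edges_dropUntil_subset _ hg''⟩
    obtain ⟨u1, α, hhα, hαP1⟩ := hA
    obtain ⟨u2, β, hfβ, hβP2⟩ := hB
    set Wit := α.reverse.append β with hWit
    have hhW : h ∈ Wit.edges := by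
      rw [hWit, Walk.edges_append, List.mem_append, Walk.edges_reverse, List.mem_reverse]
      exact Or.inl hhα
    have hfW : f ∈ Wit.edges := by
      rw [hWit, Walk.edges_append, List.mem_append]; exact Or.inr hfβ
    have hsupHF : AdjSup X r h f := by
      refine ⟨hsup.1, hlt, ?_⟩
      intro g' hg'
      have hg'W : g' ∈ Wit.edges := hg'.2.2.2 _ _ Wit hhW hfW
      have hg'P : g' ∈ P1.edges ∨ g' ∈ P2.edges := by
        rw [hWit, Walk.edges_append, List.mem_append, Walk.edges_reverse, List.mem_reverse] at hg'W
        rcases hg'W with hh | hh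
        · exact Or.inl (hαP1 _ hh)
        · exact Or.inr (hβP2 _ hh)
      have hcurlt : r cur < r h := hpar.1.2.1
      rcases hg'P with hh | hh
      · by_cases hgc : g' = cur
        · rw [hgc]; exact hcurlt
        · have : g' ∈ edgesBetween X cur h :=
            ⟨P1.edges_subset_edgeSet hh, hgc, hg'.2.1,
              fun a b w hew hfw => hP1all a b w hew hfw g' hh⟩
          exact lt_trans (hpar.1.2.2 g' this) hcurlt
      · by_cases hgc : g' = cur
        · rw [hgc]; exact hcurlt
        · have : g' ∈ edgesBetween X cur f :=
            ⟨P2.edges_subset_edgeSet hh, hgc, hg'.2.2.1,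
              fun a b w hew hfw => hP2all a b w hew hfw g' hh⟩
          exact lt_trans (hsup.2.2 g' this) hcurlt
    exact ih h hsp hsupHF (by have h1 : r cur < r h := hpar.1.2.1; have h2 := hlt; have h3 := hk; omega)


/-- Characterization: if `r m < r f` and every edge strictly between `m` and `f`
has rank `< r f`, then `f` is on the spine of `m`. -/
lemma spine_intro {r : Sym2 V → ℕ} (ht : (X.induce X.support).IsTree)
    (hrX : Set.InjOn r X.edgeSet) :
    ∀ (N : ℕ) {m f : Sym2 V}, m ∈ X.edgeSet → f ∈ X.edgeSet → r m < r f →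
      (∀ g' ∈ edgesBetween X m f, r g' < r f) → r f - r m ≤ N → f ∈ spine X r m := by
  intro N
  induction N using Nat.strong_induction_on with
  | _ N IH =>
  intro m f hm hf hmf hball hN
  by_cases hS : ∀ g' ∈ edgesBetween X m f, r g' < r m
  · exact spine_of_adjSup ht hrX hm (r f) m Relation.ReflTransGen.refl ⟨hf, hmf, hS⟩ (Nat.sub_le _ _)
  · push_neg at hS
    obtain ⟨g0, hg0b, hg0ge⟩ := hS
    have hg0m : r m < r g0 :=
      lt_of_le_of_ne hg0ge (fun hEq => hg0b.2.1 (hrX hg0b.1 hm hEq.symm))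
    set K := {n | ∃ g' ∈ edgesBetween X m f, r g' = n} with hK
    have hKne : K.Nonempty := ⟨r g0, g0, hg0b, rfl⟩
    have hKbdd : BddAbove K := ⟨r f, fun n ⟨g', hg', hr'⟩ => hr' ▸ le_of_lt (hball g' hg')⟩
    obtain ⟨e', he'b, he'r⟩ := Nat.sSup_mem hKne hKbdd
    have maxprop : ∀ g' ∈ edgesBetween X m f, r g' ≤ r e' :=
      fun g' hg' => he'r ▸ le_csSup hKbdd ⟨g', hg', rfl⟩
    have hme' : r m < r e' := lt_of_lt_of_le hg0m (maxprop g0 hg0b)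
    have he'f : r e' < r f := hball e' he'b
    have he'E : e' ∈ X.edgeSet := he'b.1
    have hmfne : m ≠ f := fun hEq => absurd hmf (by rw [hEq]; exact lt_irrefl _)
    obtain ⟨s, t, P, hPp, hmP, hfP, hsP, htP, ⟨b2, h1, Pt, hPcons, hsb2⟩,
      ⟨u2, h2, Pi, hPconc, hu2t⟩, hPall⟩ := pathBetween ht hm hf hmfne
    have hPedges1 : P.edges = m :: Pt.edges := by
      rw [hPcons, Walk.edges_cons, hsb2]
    have hPedges2 : P.edges = Pi.edges ++ [f] := by
      rw [hPconc, Walk.edges_concat, List.concat_eq_append, hu2t]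
    have hnd := hPp.edges_nodup
    have hmPt : m ∉ Pt.edges := by
      rw [hPedges1] at hnd; exact (List.nodup_cons.mp hnd).1
    have hfPi : f ∉ Pi.edges := by
      rw [hPedges2] at hnd
      intro hmem
      exact (List.nodup_append'.mp hnd).2.2 hmem (List.mem_singleton.mpr rfl)
    have he'P : e' ∈ P.edges := he'b.2.2.2 s t P hmP hfP
    have he'ne_f : e' ≠ f := fun hEq => absurd he'f (by rw [hEq]; exact lt_irrefl _)
    have he'ne_m : e' ≠ m := he'b.2.1
    have he'Pi : e' ∈ Pi.edges := by
      have := he'P; rw [hPedges2, List.mem_append] at this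
      rcases this with h | h
      · exact h
      · exact absurd (List.mem_singleton.mp h) he'ne_f
    have he'Pt : e' ∈ Pt.edges := by
      have := he'P; rw [hPedges1, List.mem_cons] at this
      rcases this with h | h
      · exact absurd h he'ne_m
      · exact h
    have hmPi : m ∈ Pi.edges := by
      have := hmP; rw [hPedges2, List.mem_append] at this
      rcases this with h | h
      · exact h
      · exact absurd (List.mem_singleton.mp h) hmfne
    have hfPt : f ∈ Pt.edges := by
      have := hfP; rw [hPedges1, List.mem_cons] at this
      rcases this with h | h
      · exact absurd h.symm hmfne
      · exact h
    have sub1 : edgesBetween X m e' ⊆ edgesBetween X m f := by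
      intro g'' hg''
      refine ⟨hg''.1, hg''.2.1, ?_, ?_⟩
      · intro hEq
        subst hEq
        exact hfPi (hg''.2.2.2 _ _ Pi hmPi he'Pi)
      · intro a b w hmw hfw
        exact hg''.2.2.2 a b w hmw (he'b.2.2.2 a b w hmw hfw)
    have sub2 : edgesBetween X e' f ⊆ edgesBetween X m f := by
      intro g'' hg''
      refine ⟨hg''.1, ?_, hg''.2.2.1, ?_⟩
      · intro hEq
        subst hEq
        exact hmPt (hg''.2.2.2 _ _ Pt he'Pt hfPt)
      · intro a b w hmw hfw
        exact hg''.2.2.2 a b w (he'b.2.2.2 a b w hmw hfw) hfw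
    have rec1 : e' ∈ spine X r m := by
      refine IH (r e' - r m) (by omega) hm he'E hme' ?_ (le_refl _)
      intro g'' hg''
      have hle := maxprop g'' (sub1 hg'')
      have hne : g'' ≠ e' := hg''.2.2.1
      exact lt_of_le_of_ne hle (fun hEq => hne (hrX (hg''.1) he'E hEq))
    have rec2 : f ∈ spine X r e' := by
      refine IH (r f - r e') (by omega) he'E hf he'f ?_ (le_refl _)
      exact fun g'' hg'' => hball g'' (sub2 hg'')
    exact rec1.trans rec2


/-- Spine walk: for `f` on the spine of `m` with `v ∈ m`, there is a walk from `v`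
ending at an endpoint of `f`, containing `f`, all of whose other edges have rank
bounded by some spine element of rank `< r f`. -/
lemma spine_walk {r : Sym2 V → ℕ} (ht : (X.induce X.support).IsTree) {v : V} {m : Sym2 V}
    (hm : m ∈ X.edgeSet) (hvm : v ∈ m) :
    ∀ f ∈ spine X r m, ∃ (c : V) (w : X.Walk v c), c ∈ f ∧ f ∈ w.edges ∧
      ∀ g' ∈ w.edges, g' = f ∨
        ∃ s', s' ∈ spine X r m ∧ r s' < r f ∧ r g' ≤ r s' := by
  classical
  intro f hf
  induction hf with
  | refl =>
    obtain ⟨z, hz⟩ := Sym2.mem_iff_exists.mp hvm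
    have hadj : X.Adj v z := by rw [hz] at hm; exact hm
    refine ⟨z, Walk.cons hadj Walk.nil, hz ▸ Sym2.mem_mk_right _ _, ?_, ?_⟩
    · rw [Walk.edges_cons, hz]; exact List.mem_cons_self
    · intro g' hg'
      rw [Walk.edges_cons, Walk.edges_nil, List.mem_singleton] at hg'
      left; rw [hz]; exact hg'
  | @tail f' f'' hspine hpar ih =>
    obtain ⟨c1, w1, hc1, hf'w1, hbd⟩ := ih
    have hf'sp : f' ∈ spine X r m := hspine
    have hlt : r f' < r f'' := hpar.1.2.1
    have hne : f' ≠ f'' := fun hEq => absurd hlt (by rw [hEq]; exact lt_irrefl _)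
    have hf'E : f' ∈ X.edgeSet := spine_sub_edgeSet hm f' hf'sp
    have hf''E : f'' ∈ X.edgeSet := hpar.1.1
    obtain ⟨s2, t2, P, hPp, hf'P, hf''P, hs2, ht2, _, _, hPall⟩ :=
      pathBetween ht hf'E hf''E hne
    obtain ⟨o1, ho1⟩ := Sym2.mem_iff_exists.mp hc1
    have hc1P : c1 ∈ P.support := P.fst_mem_support_of_mem_edges (ho1 ▸ hf'P)
    by_cases hcf : c1 ∈ f''
    · obtain ⟨o2, ho2⟩ := Sym2.mem_iff_exists.mp hcf
      have hadj : X.Adj c1 o2 := by rw [ho2] at hf''E; exact hf''E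
      refine ⟨o2, w1.append (Walk.cons hadj Walk.nil), ho2 ▸ Sym2.mem_mk_right _ _, ?_, ?_⟩
      · rw [Walk.edges_append, List.mem_append, Walk.edges_cons, ho2]
        exact Or.inr (List.mem_cons_self)
      · intro g' hg'
        rw [Walk.edges_append, List.mem_append] at hg'
        rcases hg' with h | h
        · rcases hbd g' h with h' | ⟨s', hs1, hs2', hs3⟩
          · exact Or.inr ⟨f', hf'sp, hlt, le_of_eq (by rw [h'])⟩
          · exact Or.inr ⟨s', hs1, lt_trans hs2' hlt, hs3⟩
        · rw [Walk.edges_cons, Walk.edges_nil] at h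
          left
          rw [ho2]
          simpa using h
    · -- f'' lies in the part of P after c1
      have hsplit := P.take_spec hc1P
      have hf''drop : f'' ∈ (P.dropUntil c1 hc1P).edges := by
        have : f'' ∈ (P.takeUntil c1 hc1P).edges ∨ f'' ∈ (P.dropUntil c1 hc1P).edges := by
          rw [← List.mem_append, ← Walk.edges_append, hsplit]; exact hf''P
        rcases this with h | h
        · exfalso
          obtain ⟨o3, ho3⟩ := Sym2.mem_iff_exists.mp ht2
          have ht2tk : t2 ∈ (P.takeUntil c1 hc1P).support :=
            (P.takeUntil c1 hc1P).fst_mem_support_of_mem_edges (ho3 ▸ h)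
          have := end_eq_of_mem_takeUntil hPp hc1P ht2tk
          rw [← this] at hcf
          exact hcf ht2
        · exact h
      refine ⟨t2, w1.append (P.dropUntil c1 hc1P), ht2, ?_, ?_⟩
      · rw [Walk.edges_append, List.mem_append]; exact Or.inr hf''drop
      · intro g' hg'
        rw [Walk.edges_append, List.mem_append] at hg'
        rcases hg' with h | h
        · rcases hbd g' h with h' | ⟨s', hsa, hsb, hsc⟩
          · exact Or.inr ⟨f', hf'sp, hlt, le_of_eq (by rw [h'])⟩
          · exact Or.inr ⟨s', hsa, lt_trans hsb hlt, hsc⟩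
        · have hgP : g' ∈ P.edges := P.edges_dropUntil_subset _ h
          by_cases hgf'' : g' = f''
          · exact Or.inl hgf''
          by_cases hgf' : g' = f'
          · exact Or.inr ⟨f', hf'sp, hlt, le_of_eq (by rw [hgf'])⟩
          · have : g' ∈ edgesBetween X f' f'' :=
              ⟨P.edges_subset_edgeSet hgP, hgf', hgf'',
                fun a b w hew hfw => hPall a b w hew hfw g' hgP⟩
            exact Or.inr ⟨f', hf'sp, hlt, le_of_lt (hpar.1.2.2 g' this)⟩


section Merge

variable {A B : SimpleGraph V} {v : V}

lemma reach_v (hsupp : A.support ∩ B.support = {v}) :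
    ∀ {c b'} (u : (A ⊔ B).Walk c b'), c ∈ B.support → (b' = v ∨ b' ∈ A.support) →
      v ∈ u.support
  | c, _, Walk.nil, hc, hb => by
      rcases hb with rfl | hb
      · exact Walk.start_mem_support _
      · have : c ∈ ({v} : Set V) := hsupp ▸ ⟨hb, hc⟩
        rw [Set.mem_singleton_iff] at this
        rw [Walk.support_nil, List.mem_singleton]
        exact this.symm
  | c, b', Walk.cons h p, hc, hb => by
      rcases (sup_adj _ _ _ _).mp h with hA | hB
      · have : c ∈ ({v} : Set V) := hsupp ▸ ⟨(SimpleGraph.mem_support _).mpr ⟨_, hA⟩, hc⟩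
        rw [Set.mem_singleton_iff] at this
        rw [Walk.support_cons, List.mem_cons]
        exact Or.inl this.symm
      · have hd : _ ∈ B.support := (SimpleGraph.mem_support _).mpr ⟨_, hB.symm⟩
        rw [Walk.support_cons, List.mem_cons]
        exact Or.inr (reach_v hsupp p hd hb)

lemma descend (hsupp : A.support ∩ B.support = {v}) :
    ∀ (n : ℕ) {a b} (u : (A ⊔ B).Walk a b), u.length ≤ n →
      (a = v ∨ a ∈ A.support) → (b = v ∨ b ∈ A.support) →
      ∃ w1 : A.Walk a b, ∀ g' ∈ w1.edges, g' ∈ u.edges := by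
  classical
  intro n
  induction n with
  | zero =>
    intro a b u hlen _ _
    cases u with
    | nil => exact ⟨Walk.nil, by simp⟩
    | cons h p => simp [Walk.length_cons] at hlen
  | succ n ih =>
    intro a b u hlen ha hb
    cases u with
    | nil => exact ⟨Walk.nil, by simp⟩
    | @cons _ d _ h p =>
      rcases (sup_adj _ _ _ _).mp h with hA | hB
      · have hd : d ∈ A.support := (SimpleGraph.mem_support _).mpr ⟨_, hA.symm⟩
        obtain ⟨w1, hw1⟩ := ih p (by rw [Walk.length_cons] at hlen; omega) (Or.inr hd) hb
        refine ⟨Walk.cons hA w1, ?_⟩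
        intro g' hg'
        rw [Walk.edges_cons, List.mem_cons] at hg' ⊢
        rcases hg' with h' | h'
        · exact Or.inl h'
        · exact Or.inr (hw1 g' h')
      · have hav : a = v := by
          rcases ha with h' | h'
          · exact h'
          · have : a ∈ ({v} : Set V) :=
              hsupp ▸ ⟨h', (SimpleGraph.mem_support _).mpr ⟨_, hB⟩⟩
            rwa [Set.mem_singleton_iff] at this
        have hd : d ∈ B.support := (SimpleGraph.mem_support _).mpr ⟨_, hB.symm⟩
        have hv : v ∈ p.support := reach_v hsupp p hd hb
        have hlen' : (p.dropUntil v hv).length ≤ n := by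
          have h1 := congrArg Walk.length (p.take_spec hv)
          rw [Walk.length_append] at h1
          rw [Walk.length_cons] at hlen
          omega
        obtain ⟨w1, hw1⟩ := ih (p.dropUntil v hv) hlen' (Or.inl rfl) hb
        subst hav
        refine ⟨w1, ?_⟩
        intro g' hg'
        rw [Walk.edges_cons, List.mem_cons]
        exact Or.inr (p.edges_dropUntil_subset _ (hw1 g' hg'))

lemma extract (hsupp : A.support ∩ B.support = {v}) {e g : Sym2 V}
    (he : e ∈ A.edgeSet) (hg : g ∈ A.edgeSet) {a b} (w : (A ⊔ B).Walk a b)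
    (hew : e ∈ w.edges) (hgw : g ∈ w.edges) :
    ∃ (x y : V) (w1 : A.Walk x y), e ∈ w1.edges ∧ g ∈ w1.edges ∧
      ∀ g' ∈ w1.edges, g' ∈ w.edges := by
  classical
  induction e using Sym2.ind with | _ x y =>
  induction g using Sym2.ind with | _ c d =>
  have hxy : A.Adj x y := he
  have hcd : A.Adj c d := hg
  have hxw : x ∈ w.support := w.fst_mem_support_of_mem_edges hew
  have hcw : c ∈ w.support := w.fst_mem_support_of_mem_edges hgw
  set u0 := (w.takeUntil x hxw).reverse.append (w.takeUntil c hcw) with hu0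
  have hu0sub : ∀ g' ∈ u0.edges, g' ∈ w.edges := by
    intro g' hg'
    rw [hu0, Walk.edges_append, List.mem_append, Walk.edges_reverse, List.mem_reverse] at hg'
    rcases hg' with h | h
    · exact w.edges_takeUntil_subset _ h
    · exact w.edges_takeUntil_subset _ h
  obtain ⟨mid, hmid⟩ := descend hsupp u0.length u0 (le_refl _)
    (Or.inr ((SimpleGraph.mem_support _).mpr ⟨_, hxy⟩))
    (Or.inr ((SimpleGraph.mem_support _).mpr ⟨_, hcd⟩))
  refine ⟨y, d, Walk.cons hxy.symm (mid.concat hcd), ?_, ?_, ?_⟩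
  · rw [Walk.edges_cons, List.mem_cons]
    exact Or.inl Sym2.eq_swap.symm
  · rw [Walk.edges_cons, List.mem_cons, Walk.edges_concat, List.concat_eq_append]
    exact Or.inr (List.mem_append.mpr (Or.inr (List.mem_singleton.mpr rfl)))
  · intro g' hg'
    rw [Walk.edges_cons, List.mem_cons, Walk.edges_concat, List.concat_eq_append,
      List.mem_append] at hg'
    rcases hg' with h | h | h
    · rw [h, Sym2.eq_swap]; exact hew
    · exact hu0sub g' (hmid g' h)
    · rw [List.mem_singleton.mp h]; exact hgw

/-- Edges between two `A`-edges, computed in `A`, are edges between them in `A ⊔ B`. -/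
lemma between_sub (hsupp : A.support ∩ B.support = {v}) {e g : Sym2 V}
    (he : e ∈ A.edgeSet) (hg : g ∈ A.edgeSet) :
    edgesBetween A e g ⊆ edgesBetween (A ⊔ B) e g := by
  rintro g' ⟨hg'E, hne, hnf, hall⟩
  refine ⟨edgeSet_mono le_sup_left hg'E, hne, hnf, ?_⟩
  intro a b w hew hgw
  obtain ⟨x, y, w1, h1, h2, h3⟩ := extract hsupp he hg w hew hgw
  exact h3 g' (hall x y w1 h1 h2)

/-- Edges between two `A`-edges, computed in `A ⊔ B`, are edges between them in `A`. -/
lemma between_sup_sub (ht : (A.induce A.support).IsTree)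
    {e g : Sym2 V} (he : e ∈ A.edgeSet) (hg : g ∈ A.edgeSet) (hne : e ≠ g) :
    edgesBetween (A ⊔ B) e g ⊆ edgesBetween A e g := by
  obtain ⟨s, t, P, hPp, heP, hgP, _, _, _, _, hPall⟩ := pathBetween ht he hg hne
  intro g' hg'
  have hPG : ∀ e' ∈ P.edges, e' ∈ (A ⊔ B).edgeSet :=
    fun e' h' => edgeSet_mono le_sup_left (P.edges_subset_edgeSet h')
  set PG := P.transfer (A ⊔ B) hPG with hPGdef
  have hePG : e ∈ PG.edges := by rw [hPGdef, Walk.edges_transfer]; exact heP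
  have hgPG : g ∈ PG.edges := by rw [hPGdef, Walk.edges_transfer]; exact hgP
  have hg'P : g' ∈ P.edges := by
    have := hg'.2.2.2 s t PG hePG hgPG
    rwa [hPGdef, Walk.edges_transfer] at this
  refine ⟨P.edges_subset_edgeSet hg'P, hg'.2.1, hg'.2.2.1, ?_⟩
  intro a b w hew hgw
  have hwG : ∀ e' ∈ w.edges, e' ∈ (A ⊔ B).edgeSet :=
    fun e' h' => edgeSet_mono le_sup_left (w.edges_subset_edgeSet h')
  have := hg'.2.2.2 a b (w.transfer (A ⊔ B) hwG)
    (by rwa [Walk.edges_transfer]) (by rwa [Walk.edges_transfer])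
  rwa [Walk.edges_transfer] at this

lemma descendB (hsupp : A.support ∩ B.support = {v}) {a b} (u : (A ⊔ B).Walk a b)
    (ha : a = v ∨ a ∈ B.support) (hb : b = v ∨ b ∈ B.support) :
    ∃ w1 : B.Walk a b, ∀ g' ∈ w1.edges, g' ∈ u.edges := by
  have hsub : ∀ e ∈ u.edges, e ∈ (B ⊔ A).edgeSet := by
    intro e he
    have := u.edges_subset_edgeSet he
    rw [edgeSet_sup] at this
    rw [edgeSet_sup]
    exact Or.symm this
  set u' := u.transfer (B ⊔ A) hsub with hu'
  have hsupp' : B.support ∩ A.support = {v} := by rw [Set.inter_comm]; exact hsupp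
  obtain ⟨w1, hw1⟩ := descend hsupp' u'.length u' (le_refl _) ha hb
  refine ⟨w1, fun g' hg' => ?_⟩
  have := hw1 g' hg'
  rwa [hu', Walk.edges_transfer] at this

lemma exists_first {G : SimpleGraph V} :
    ∀ {a b : V} (p : G.Walk a b), a ≠ b →
      ∃ (d0 : V) (h0 : G.Adj a d0) (q : G.Walk d0 b), p = Walk.cons h0 q
  | _, _, Walk.nil, hne => absurd rfl hne
  | _, _, Walk.cons h q, _ => ⟨_, h, q, rfl⟩

/-- From any walk in `A ⊔ B` containing an `A`-edge `e` and visiting `c ∈ B.support`,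
extract a `B`-walk from `v` to `c` inside it. -/
lemma walkB_from_v (hsupp : A.support ∩ B.support = {v}) {e : Sym2 V}
    (heA : e ∈ A.edgeSet) {c : V} (hcB : c ∈ B.support) {a b} (w : (A ⊔ B).Walk a b)
    (hew : e ∈ w.edges) (hcw : c ∈ w.support) :
    ∃ u1 : B.Walk v c, ∀ g' ∈ u1.edges, g' ∈ w.edges := by
  classical
  induction e using Sym2.ind with | _ x y =>
  have hxy : A.Adj x y := heA
  have hxA : x ∈ A.support := (SimpleGraph.mem_support _).mpr ⟨_, hxy⟩
  have hxw : x ∈ w.support := w.fst_mem_support_of_mem_edges hew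
  set piece := ((w.takeUntil x hxw).reverse.append (w.takeUntil c hcw)) with hpiece
  have hvp : v ∈ piece.reverse.support :=
    reach_v hsupp piece.reverse hcB (Or.inr hxA)
  have hvw : v ∈ w.support := by
    rw [Walk.support_reverse, List.mem_reverse, hpiece] at hvp
    rw [Walk.mem_support_append_iff, Walk.support_reverse, List.mem_reverse] at hvp
    rcases hvp with h | h
    · exact w.support_takeUntil_subset _ h
    · exact w.support_takeUntil_subset _ h
  set u0 := (w.takeUntil v hvw).reverse.append (w.takeUntil c hcw) with hu0
  have hu0sub : ∀ g' ∈ u0.edges, g' ∈ w.edges := by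
    intro g' hg'
    rw [hu0, Walk.edges_append, List.mem_append, Walk.edges_reverse, List.mem_reverse] at hg'
    rcases hg' with h | h
    · exact w.edges_takeUntil_subset _ h
    · exact w.edges_takeUntil_subset _ h
  obtain ⟨u1, hu1⟩ := descendB hsupp u0 (Or.inl rfl) (Or.inr hcB)
  exact ⟨u1, fun g' hg' => hu0sub g' (hu1 g' hg')⟩

/-- Edges between `e2s` and a `B`-edge `h`, computed in `B`, lie between any
`A`-edge `e` and `h` in `A ⊔ B`. -/
lemma cross_between (hsupp : A.support ∩ B.support = {v})
    (hdisj : Disjoint A.edgeSet B.edgeSet) {e2s e h : Sym2 V}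
    (he2 : e2s ∈ B.edgeSet) (hv2 : v ∈ e2s) (heA : e ∈ A.edgeSet) (hhB : h ∈ B.edgeSet) :
    edgesBetween B e2s h ⊆ edgesBetween (A ⊔ B) e h := by
  classical
  intro g' hg'
  refine ⟨edgeSet_mono le_sup_right hg'.1, ?_, hg'.2.2.1, ?_⟩
  · intro hEq
    exact Set.disjoint_left.mp hdisj heA (hEq ▸ hg'.1)
  · intro a b w hew hhw
    induction h using Sym2.ind with | _ c d =>
    have hcd : B.Adj c d := hhB
    have hcB : c ∈ B.support := (SimpleGraph.mem_support _).mpr ⟨_, hcd⟩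
    have hcw : c ∈ w.support := w.fst_mem_support_of_mem_edges hhw
    obtain ⟨u1, hu1⟩ := walkB_from_v hsupp heA hcB w hew hcw
    obtain ⟨z', hz'⟩ := Sym2.mem_iff_exists.mp hv2
    have hadj2 : B.Adj v z' := by rw [hz'] at he2; exact he2
    set W2 := Walk.cons hadj2.symm (u1.concat hcd) with hW2
    have he2W : e2s ∈ W2.edges := by
      rw [hW2, Walk.edges_cons, List.mem_cons]
      exact Or.inl (by rw [hz', Sym2.eq_swap])
    have hhW : s(c, d) ∈ W2.edges := by
      rw [hW2, Walk.edges_cons, List.mem_cons, Walk.edges_concat, List.concat_eq_append]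
      exact Or.inr (List.mem_append.mpr (Or.inr (List.mem_singleton.mpr rfl)))
    have hg'W := hg'.2.2.2 z' d W2 he2W hhW
    rw [hW2, Walk.edges_cons, List.mem_cons, Walk.edges_concat, List.concat_eq_append,
      List.mem_append] at hg'W
    rcases hg'W with h' | h' | h'
    · exact absurd (by rw [h', ← Sym2.eq_swap, ← hz']) hg'.2.1
    · exact hu1 g' h'
    · rw [List.mem_singleton.mp h']; exact hhw

/-- A `B`-edge which is an adjacent superior in `A ⊔ B` of an `A`-edge `e`
lies on the spine of `e2s` in `B`. -/
lemma cross_spine (ht2 : (B.induce B.support).IsTree)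
    (hsupp : A.support ∩ B.support = {v}) (hdisj : Disjoint A.edgeSet B.edgeSet)
    {r : Sym2 V → ℕ} (hr : Set.InjOn r (A ⊔ B).edgeSet) {e2s : Sym2 V}
    (he2 : e2s ∈ B.edgeSet ∧ v ∈ e2s ∧ ∀ f ∈ B.edgeSet, v ∈ f → r e2s ≤ r f)
    {e h : Sym2 V} (heA : e ∈ A.edgeSet) (hhB : h ∈ B.edgeSet)
    (hsup : AdjSup (A ⊔ B) r e h) : h ∈ spine B r e2s := by
  classical
  have hvB : v ∈ B.support := by
    obtain ⟨z', hz'⟩ := Sym2.mem_iff_exists.mp he2.2.1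
    have : B.Adj v z' := by rw [hz'] at he2; exact he2.1
    exact (SimpleGraph.mem_support _).mpr ⟨_, this⟩
  have step1 : r e2s ≤ r h := by
    by_cases hvh : v ∈ h
    · exact he2.2.2 h hhB hvh
    · -- find the edge incident to v on the B-path from v to h
      induction h using Sym2.ind with | _ c d =>
      have hcd : B.Adj c d := hhB
      obtain ⟨a', b', hab', p', hsab, hPp⟩ := farEnd ht2 hcd hvB
      have hb'h : b' ∈ s(c, d) := by rw [← hsab]; exact Sym2.mem_mk_right _ _
      have ha'h : a' ∈ s(c, d) := by rw [← hsab]; exact Sym2.mem_mk_left _ _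
      have hva' : v ≠ a' := fun hEq => hvh (hEq ▸ ha'h)
      set p'' := (Walk.cons hab' p').reverse with hp''
      have hp''path : p''.IsPath := hPp.reverse
      obtain ⟨d0, h0, q, hq⟩ := exists_first p'' hva'
      set h'' := s(v, d0) with hh''
      have hh''B : h'' ∈ B.edgeSet := h0
      have hh''v : v ∈ h'' := Sym2.mem_mk_left _ _
      have hh''p'' : h'' ∈ p''.edges := by
        rw [hq, Walk.edges_cons]; exact List.mem_cons_self
      have hbet : h'' ∈ edgesBetween (A ⊔ B) e s(c, d) := by
        refine ⟨edgeSet_mono le_sup_right hh''B, ?_, ?_, ?_⟩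
        · intro hEq
          exact Set.disjoint_left.mp hdisj heA (hEq ▸ hh''B)
        · intro hEq
          exact hvh (hEq ▸ hh''v)
        · intro a b w hew hhw
          have ha'B : a' ∈ B.support := (SimpleGraph.mem_support _).mpr ⟨_, hab'⟩
          have ha'w : a' ∈ w.support := by
            rw [← hsab] at hhw
            exact w.fst_mem_support_of_mem_edges hhw
          obtain ⟨u1, hu1⟩ := walkB_from_v hsupp heA ha'B w hew ha'w
          have hbp : u1.bypass = p'' := path_unique ht2 hvB u1.bypass_isPath hp''path
          have : h'' ∈ u1.bypass.edges := by rw [hbp]; exact hh''p''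
          exact hu1 h'' (u1.edges_bypass_subset this)
      have hlt : r h'' < r e := hsup.2.2 h'' hbet
      have hle : r e2s ≤ r h'' := he2.2.2 h'' hh''B hh''v
      have : r e < r s(c, d) := hsup.2.1
      omega
  by_cases heq : e2s = h
  · rw [← heq]; exact Relation.ReflTransGen.refl
  · have hlt : r e2s < r h := lt_of_le_of_ne step1
      (fun hEq => heq (hr (edgeSet_mono le_sup_right he2.1) (edgeSet_mono le_sup_right hhB) hEq))
    have hrB : Set.InjOn r B.edgeSet := hr.mono (by
      rw [edgeSet_sup]; exact Set.subset_union_right)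
    refine spine_intro ht2 hrB (r h) he2.1 hhB hlt ?_ (Nat.sub_le _ _)
    intro g'' hg''
    have := hsup.2.2 g'' (cross_between hsupp hdisj he2.1 he2.2.1 heA hhB hg'')
    have h2 := hsup.2.1
    omega

/-- The master lemma: one half of Theorem 3.5, stated for ordered pair `(A, B)`. -/
lemma main (htA : (A.induce A.support).IsTree) (htB : (B.induce B.support).IsTree)
    (hsupp : A.support ∩ B.support = {v}) (hdisj : Disjoint A.edgeSet B.edgeSet)
    {r : Sym2 V → ℕ} (hr : Set.InjOn r (A ⊔ B).edgeSet) {e1s e2s : Sym2 V}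
    (he1 : e1s ∈ A.edgeSet ∧ v ∈ e1s ∧ ∀ f ∈ A.edgeSet, v ∈ f → r e1s ≤ r f)
    (he2 : e2s ∈ B.edgeSet ∧ v ∈ e2s ∧ ∀ f ∈ B.edgeSet, v ∈ f → r e2s ≤ r f) :
    ∀ e ∈ spine A r e1s,
      (({f ∈ spine B r e2s | r e < r f} = ∅) →
        ∀ g, IsParent (A ⊔ B) r e g ↔ IsParent A r e g) ∧
      (∀ f0 ∈ spine B r e2s, r e < r f0 →
        (∀ f ∈ spine B r e2s, r e < r f → r f0 ≤ r f) →
        ((∀ g, IsParent A r e g →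
            (r g < r f0 → IsParent (A ⊔ B) r e g) ∧
            (¬ r g < r f0 → IsParent (A ⊔ B) r e f0)) ∧
          ((¬ ∃ g, IsParent A r e g) → IsParent (A ⊔ B) r e f0))) := by
  intro e he
  have heA : e ∈ A.edgeSet := spine_sub_edgeSet he1.1 e he
  have heG : e ∈ (A ⊔ B).edgeSet := edgeSet_mono le_sup_left heA
  have hup : ∀ {g}, AdjSup A r e g → AdjSup (A ⊔ B) r e g := by
    intro g hg
    have hneg : e ≠ g := fun hEq => absurd hg.2.1 (by rw [hEq]; exact lt_irrefl _)
    exact ⟨edgeSet_mono le_sup_left hg.1, hg.2.1,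
      fun g' hg' => hg.2.2 g' (between_sup_sub htA heA hg.1 hneg hg')⟩
  have hdown : ∀ {g}, AdjSup (A ⊔ B) r e g → g ∈ A.edgeSet → AdjSup A r e g := by
    intro g hg hgA
    exact ⟨hgA, hg.2.1, fun g' hg' => hg.2.2 g' (between_sub hsupp heA hgA hg')⟩
  have hcross : ∀ {g}, AdjSup (A ⊔ B) r e g → g ∈ B.edgeSet → g ∈ spine B r e2s :=
    fun {g} hg hgB => cross_spine htB hsupp hdisj hr he2 heA hgB hg
  have hsplit : ∀ {g : Sym2 V}, g ∈ (A ⊔ B).edgeSet → g ∈ A.edgeSet ∨ g ∈ B.edgeSet := by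
    intro g hg; rwa [edgeSet_sup] at hg
  constructor
  · intro hF g
    have hFe : ∀ f, f ∈ spine B r e2s → ¬ r e < r f := by
      intro f hf hlt
      exact Set.eq_empty_iff_forall_notMem.mp hF f ⟨hf, hlt⟩
    constructor
    · intro hPG
      rcases hsplit hPG.1.1 with hgA | hgB
      · exact ⟨hdown hPG.1 hgA, fun g' hg' => hPG.2 g' (hup hg')⟩
      · exact absurd hPG.1.2.1 (hFe g (hcross hPG.1 hgB))
    · intro hP1
      refine ⟨hup hP1.1, ?_⟩
      intro g' hg'
      rcases hsplit hg'.1 with hA' | hB'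
      · exact hP1.2 g' (hdown hg' hA')
      · exact absurd hg'.2.1 (hFe g' (hcross hg' hB'))
  · intro f0 hf0sp hf0lt hf0min
    have hf0B : f0 ∈ B.edgeSet := spine_sub_edgeSet he2.1 f0 hf0sp
    have hAS0 : AdjSup (A ⊔ B) r e f0 := by
      obtain ⟨c1, w1, hc1, hew1, hbd1⟩ := spine_walk htA he1.1 he1.2.1 e he
      obtain ⟨c2, w2, hc2, hf0w2, hbd2⟩ := spine_walk htB he2.1 he2.2.1 f0 hf0sp
      have hw1sub : ∀ g' ∈ w1.edges, g' ∈ (A ⊔ B).edgeSet :=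
        fun g' h => edgeSet_mono le_sup_left (w1.edges_subset_edgeSet h)
      have hw2sub : ∀ g' ∈ w2.edges, g' ∈ (A ⊔ B).edgeSet :=
        fun g' h => edgeSet_mono le_sup_right (w2.edges_subset_edgeSet h)
      set W := (w1.transfer _ hw1sub).reverse.append (w2.transfer _ hw2sub) with hW
      have hWedges : ∀ g', g' ∈ W.edges ↔ (g' ∈ w1.edges ∨ g' ∈ w2.edges) := by
        intro g'
        rw [hW, Walk.edges_append, List.mem_append, Walk.edges_reverse, List.mem_reverse,
          Walk.edges_transfer, Walk.edges_transfer]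
      have heW : e ∈ W.edges := (hWedges e).mpr (Or.inl hew1)
      have hf0W : f0 ∈ W.edges := (hWedges f0).mpr (Or.inr hf0w2)
      refine ⟨edgeSet_mono le_sup_right hf0B, hf0lt, ?_⟩
      intro g' hg'
      have hg'W := (hWedges g').mp (hg'.2.2.2 _ _ W heW hf0W)
      have hg'ne : g' ≠ e := hg'.2.1
      have hg'G : g' ∈ (A ⊔ B).edgeSet := hg'.1
      rcases hg'W with h | h
      · rcases hbd1 g' h with h' | ⟨s', _, hslt, hsle⟩
        · exact absurd h' hg'ne
        · omega
      · rcases hbd2 g' h with h' | ⟨s', hssp, hslt, hsle⟩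
        · exact absurd h' hg'.2.2.1
        · have hs'le : r s' ≤ r e := by
            by_contra hcon
            push_neg at hcon
            exact absurd hslt (not_lt.mpr (hf0min s' hssp hcon))
          have hne' : r g' ≠ r e := fun hEq => hg'ne (hr hg'G heG hEq)
          omega
    have hminB : ∀ g', AdjSup (A ⊔ B) r e g' → g' ∈ B.edgeSet → r f0 ≤ r g' :=
      fun g' hg' hB' => hf0min g' (hcross hg' hB') hg'.2.1
    constructor
    · intro g hPg
      constructor
      · intro hglt
        refine ⟨hup hPg.1, ?_⟩
        intro g' hg'
        rcases hsplit hg'.1 with hA' | hB'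
        · exact hPg.2 g' (hdown hg' hA')
        · exact le_trans (le_of_lt hglt) (hminB g' hg' hB')
      · intro hgge
        refine ⟨hAS0, ?_⟩
        intro g' hg'
        rcases hsplit hg'.1 with hA' | hB'
        · exact le_trans (not_lt.mp hgge) (hPg.2 g' (hdown hg' hA'))
        · exact hminB g' hg' hB'
    · intro hnone
      refine ⟨hAS0, ?_⟩
      intro g' hg'
      rcases hsplit hg'.1 with hA' | hB'
      · exact absurd (exists_parent (hdown hg' hA')) hnone
      · exact hminB g' hg' hB'

end Merge

end SLD

/- Merge setting: `G1` and `G2` are finite trees (on their supports) over a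
common ambient vertex type, sharing exactly the vertex `v` and no edges, so
`G1 ⊔ G2` is a tree. A single injective rank function `r` is given on the
edges of `G1 ⊔ G2`. `e1s` and `e2s` are the minimum-rank edges incident to
`v` in `G1` and `G2` respectively. -/

variable [Fintype V] (G1 G2 : SimpleGraph V) (v : V) (r : Sym2 V → ℕ)
  (e1s e2s : Sym2 V)

/-- Theorem 3.5 (correctness of SLD-Merge). For `e ∈ spine1(e1*)`, let
`F = {f ∈ spine2(e2*) | r f > r e}`. If `F = ∅` then `p(e) = p1(e)` (both
defined or both undefined). If `F ≠ ∅` with minimum-rank element `f0`, then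
`p(e) = p1(e)` if `p1(e)` is defined with `r (p1 e) < r f0`, and `p(e) = f0`
otherwise. The symmetric statement holds for `e ∈ spine2(e2*)`. -/
theorem stmt8
    (h1 : (G1.induce G1.support).IsTree) (h2 : (G2.induce G2.support).IsTree)
    (hne1 : G1.edgeSet.Nonempty) (hne2 : G2.edgeSet.Nonempty)
    (hsupp : G1.support ∩ G2.support = {v})
    (hdisj : Disjoint G1.edgeSet G2.edgeSet)
    (hr : Set.InjOn r (G1 ⊔ G2).edgeSet)
    (he1 : e1s ∈ G1.edgeSet ∧ v ∈ e1s ∧ ∀ f ∈ G1.edgeSet, v ∈ f → r e1s ≤ r f)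
    (he2 : e2s ∈ G2.edgeSet ∧ v ∈ e2s ∧ ∀ f ∈ G2.edgeSet, v ∈ f → r e2s ≤ r f) :
    (∀ e ∈ spine G1 r e1s,
      (({f ∈ spine G2 r e2s | r e < r f} = ∅) →
        ∀ g, IsParent (G1 ⊔ G2) r e g ↔ IsParent G1 r e g) ∧
      (∀ f0 ∈ spine G2 r e2s, r e < r f0 →
        (∀ f ∈ spine G2 r e2s, r e < r f → r f0 ≤ r f) →
        ((∀ g, IsParent G1 r e g →
            (r g < r f0 → IsParent (G1 ⊔ G2) r e g) ∧
            (¬ r g < r f0 → IsParent (G1 ⊔ G2) r e f0)) ∧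
          ((¬ ∃ g, IsParent G1 r e g) → IsParent (G1 ⊔ G2) r e f0)))) ∧
    (∀ e ∈ spine G2 r e2s,
      (({f ∈ spine G1 r e1s | r e < r f} = ∅) →
        ∀ g, IsParent (G1 ⊔ G2) r e g ↔ IsParent G2 r e g) ∧
      (∀ f0 ∈ spine G1 r e1s, r e < r f0 →
        (∀ f ∈ spine G1 r e1s, r e < r f → r f0 ≤ r f) →
        ((∀ g, IsParent G2 r e g →
            (r g < r f0 → IsParent (G1 ⊔ G2) r e g) ∧
            (¬ r g < r f0 → IsParent (G1 ⊔ G2) r e f0)) ∧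
          ((¬ ∃ g, IsParent G2 r e g) → IsParent (G1 ⊔ G2) r e f0)))) := by
  constructor
  · exact SLD.main h1 h2 hsupp hdisj hr he1 he2
  · have hsupp' : G2.support ∩ G1.support = {v} := by rw [Set.inter_comm]; exact hsupp
    have hr' : Set.InjOn r (G2 ⊔ G1).edgeSet := by rwa [sup_comm G2 G1]
    have H := SLD.main h2 h1 hsupp' hdisj.symm hr' he2 he1
    rwa [sup_comm G2 G1] at H
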